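/- Let P be a monic polynomial of degree d ≥ 2 over ℂ. There exists R > 1 such that for every z with |z| ≥ R, the orbit (P^k(z)) satisfies |P^{k+1}(z)| ≥ |P^k(z)|^{d}/2 ≥ |P^k(z)| for all k, the sequence d^{-k} log|P^k(z)| converges, and its limit h(z) satisfies h(z) > 0 and h(P(z)) = d · h(z). -/

import Mathlib

open Polynomial Filter Topology

theorem potential_escaping (d : ℕ) (hd : 2 ≤ d) (P : Polynomial ℂ) (hP : P.Monic)
    (hdeg : P.natDegree = d) :
    ∃ R > (1 : ℝ), ∃ h : ℂ → ℝ, ∀ z : ℂ, R ≤ ‖z‖ →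
      (∀ k : ℕ, ‖(P.eval)^[k] z‖ ^ d / 2 ≤ ‖(P.eval)^[k + 1] z‖ ∧
        ‖(P.eval)^[k] z‖ ≤ ‖(P.eval)^[k] z‖ ^ d / 2) ∧
      Tendsto (fun k : ℕ => Real.log ‖(P.eval)^[k] z‖ / (d : ℝ) ^ k) atTop (𝓝 (h z)) ∧
      0 < h z ∧ h (P.eval z) = d * h z := by
  have hd0 : 0 < d := by omega
  set Q : Polynomial ℂ := P - X ^ d with hQdef
  have hQdeg : Q.natDegree < d := by
    by_cases h0 : Q = 0
    · simpa [h0] using hd0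
    · rw [Polynomial.natDegree_lt_iff_degree_lt h0]
      have hdegP : P.degree = (d : ℕ) := by
        rw [Polynomial.degree_eq_natDegree hP.ne_zero, hdeg]
      have := Polynomial.degree_sub_lt (p := P) (q := X ^ d)
        (by rw [hdegP, Polynomial.degree_X_pow]) hP.ne_zero
        (by rw [hP.leadingCoeff, Polynomial.leadingCoeff_X_pow])
      rw [hdegP] at this
      exact this
  set C : ℝ := ∑ i ∈ Finset.range d, ‖Q.coeff i‖ with hCdef
  have hC0 : 0 ≤ C := Finset.sum_nonneg fun i _ => norm_nonneg _
  set R : ℝ := max 4 (2 * C + 2) with hRdef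
  have hR4 : (4 : ℝ) ≤ R := le_max_left _ _
  have hR1 : (1 : ℝ) < R := by linarith
  -- key pointwise estimates
  have key : ∀ w : ℂ, R ≤ ‖w‖ →
      ‖w‖ ^ d / 2 ≤ ‖P.eval w‖ ∧ ‖P.eval w‖ ≤ 2 * ‖w‖ ^ d ∧ ‖w‖ ≤ ‖w‖ ^ d / 2 := by
    intro w hw
    have hw4 : (4 : ℝ) ≤ ‖w‖ := le_trans hR4 hw
    have hw1 : (1 : ℝ) ≤ ‖w‖ := by linarith
    have hw0 : (0 : ℝ) ≤ ‖w‖ := by linarith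
    have hw2C : 2 * C ≤ ‖w‖ := le_trans (le_trans (by linarith) (le_max_right 4 (2 * C + 2))) hw
    have hQb : ‖Q.eval w‖ ≤ ‖w‖ ^ d / 2 := by
      calc ‖Q.eval w‖ = ‖∑ i ∈ Finset.range d, Q.coeff i * w ^ i‖ := by
            rw [Polynomial.eval_eq_sum_range' hQdeg]
        _ ≤ ∑ i ∈ Finset.range d, ‖Q.coeff i * w ^ i‖ := norm_sum_le _ _
        _ = ∑ i ∈ Finset.range d, ‖Q.coeff i‖ * ‖w‖ ^ i := by
            simp [norm_mul, norm_pow]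
        _ ≤ ∑ i ∈ Finset.range d, ‖Q.coeff i‖ * ‖w‖ ^ (d - 1) := by
            refine Finset.sum_le_sum fun i hi => ?_
            refine mul_le_mul_of_nonneg_left ?_ (norm_nonneg _)
            exact pow_le_pow_right₀ hw1 (by have := Finset.mem_range.mp hi; omega)
        _ = C * ‖w‖ ^ (d - 1) := by rw [← Finset.sum_mul]
        _ ≤ (‖w‖ / 2) * ‖w‖ ^ (d - 1) := by
            exact mul_le_mul_of_nonneg_right (by linarith) (pow_nonneg hw0 _)
        _ = ‖w‖ ^ d / 2 := by
            rw [div_mul_eq_mul_div]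
            congr 1
            rw [← pow_succ']
            congr 1
            omega
    have hPw : P.eval w = w ^ d + Q.eval w := by
      simp [hQdef]
    have htri : ‖w‖ ^ d ≤ ‖P.eval w‖ + ‖Q.eval w‖ := by
      have := norm_add_le (w ^ d + Q.eval w) (-(Q.eval w))
      simp only [add_neg_cancel_right, norm_neg] at this
      calc ‖w‖ ^ d = ‖w ^ d‖ := (norm_pow _ _).symm
        _ ≤ ‖w ^ d + Q.eval w‖ + ‖Q.eval w‖ := this
        _ = ‖P.eval w‖ + ‖Q.eval w‖ := by rw [hPw]
    have htri2 : ‖P.eval w‖ ≤ ‖w‖ ^ d + ‖Q.eval w‖ := by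
      rw [hPw]
      calc ‖w ^ d + Q.eval w‖ ≤ ‖w ^ d‖ + ‖Q.eval w‖ := norm_add_le _ _
        _ = ‖w‖ ^ d + ‖Q.eval w‖ := by rw [norm_pow]
    have hmono : ‖w‖ ≤ ‖w‖ ^ d / 2 := by
      have h2 : ‖w‖ ^ 2 ≤ ‖w‖ ^ d := pow_le_pow_right₀ hw1 hd
      nlinarith
    exact ⟨by linarith, by linarith, hmono⟩
  refine ⟨R, hR1, fun w => limUnder atTop
    (fun k : ℕ => Real.log ‖(P.eval)^[k] w‖ / (d : ℝ) ^ k), ?_⟩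
  intro z hz
  have horb : ∀ k, R ≤ ‖(P.eval)^[k] z‖ := by
    intro k
    induction k with
    | zero => simpa using hz
    | succ k ih =>
      rw [Function.iterate_succ_apply']
      have h1 := (key _ ih).1
      have h3 := (key _ ih).2.2
      linarith
  have hdR : (2 : ℝ) ≤ (d : ℝ) := by exact_mod_cast hd
  have hdpos : (0 : ℝ) < (d : ℝ) := by linarith
  set a : ℕ → ℝ := fun k => Real.log ‖(P.eval)^[k] z‖ / (d : ℝ) ^ k with hadef
  have hrpos : ∀ k, (0 : ℝ) < ‖(P.eval)^[k] z‖ := fun k => by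
    have := horb k; linarith
  -- log drift bound
  have hgap : ∀ k, |a (k + 1) - a k| ≤ Real.log 2 / (d : ℝ) ^ (k + 1) := by
    intro k
    set r : ℝ := ‖(P.eval)^[k] z‖ with hrdef
    have hr4 : (4 : ℝ) ≤ r := le_trans hR4 (horb k)
    have hr0 : (0 : ℝ) < r := by linarith
    have hrd0 : (0 : ℝ) < r ^ d := pow_pos hr0 d
    have hk := key _ (horb k)
    have hiter : (P.eval)^[k + 1] z = P.eval ((P.eval)^[k] z) :=
      Function.iterate_succ_apply' _ _ _
    set r' : ℝ := ‖(P.eval)^[k + 1] z‖ with hr'def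
    have hr'0 : (0 : ℝ) < r' := hrpos (k + 1)
    have hlow : r ^ d / 2 ≤ r' := by rw [hr'def, hiter]; exact hk.1
    have hhigh : r' ≤ 2 * r ^ d := by rw [hr'def, hiter]; exact hk.2.1
    have hlog1 : (d : ℝ) * Real.log r - Real.log 2 ≤ Real.log r' := by
      have := Real.log_le_log (by positivity) hlow
      rwa [Real.log_div (ne_of_gt hrd0) (by norm_num), Real.log_pow] at this
    have hlog2 : Real.log r' ≤ Real.log 2 + (d : ℝ) * Real.log r := by
      have := Real.log_le_log hr'0 hhigh
      rwa [Real.log_mul (by norm_num) (ne_of_gt hrd0), Real.log_pow] at this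
    have hdk : (0 : ℝ) < (d : ℝ) ^ (k + 1) := pow_pos hdpos _
    have hdk' : (0 : ℝ) < (d : ℝ) ^ k := pow_pos hdpos _
    have heq : a (k + 1) - a k = (Real.log r' - (d : ℝ) * Real.log r) / (d : ℝ) ^ (k + 1) := by
      simp only [hadef, ← hrdef, ← hr'def]
      field_simp
      ring
    rw [heq, abs_div, abs_of_pos hdk]
    gcongr
    exact abs_le.mpr ⟨by linarith, by linarith⟩
  have hl2 : (0 : ℝ) ≤ Real.log 2 := Real.log_nonneg (by norm_num)
  have hstep : ∀ k, |a (k + 1) - a k| ≤ (Real.log 2 / 2) * (1 / 2 : ℝ) ^ k := by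
    intro k
    refine le_trans (hgap k) ?_
    have h2d : (2 : ℝ) ^ (k + 1) ≤ (d : ℝ) ^ (k + 1) :=
      pow_le_pow_left₀ (by norm_num) hdR _
    have h2p : (0 : ℝ) < (2 : ℝ) ^ (k + 1) := by positivity
    have h1 : Real.log 2 / (d : ℝ) ^ (k + 1) ≤ Real.log 2 / (2 : ℝ) ^ (k + 1) :=
      div_le_div_of_nonneg_left hl2 h2p h2d
    refine le_trans h1 (le_of_eq ?_)
    have h12 : ((1 : ℝ) / 2) ^ k = 1 / 2 ^ k := by rw [div_pow, one_pow]
    rw [h12, pow_succ]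
    ring
  have hca : CauchySeq a := by
    refine cauchySeq_of_le_geometric (1 / 2) (Real.log 2 / 2) (by norm_num) fun n => ?_
    rw [Real.dist_eq, abs_sub_comm]
    exact hstep n
  obtain ⟨L, hL⟩ := cauchySeq_tendsto_of_complete hca
  have hlim : limUnder atTop a = L := hL.limUnder_eq
  have hlow : ∀ k, a 0 - Real.log 2 * (1 - (1 / 2 : ℝ) ^ k) ≤ a k := by
    intro k
    induction k with
    | zero => simp
    | succ k ih =>
      have hs := (abs_le.mp (hstep k)).1
      have hpow : ((1 : ℝ) / 2) ^ (k + 1) = (1 / 2 : ℝ) ^ k * (1 / 2) := pow_succ _ _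
      nlinarith
  have ha0 : Real.log R ≤ a 0 := by
    have := Real.log_le_log (by linarith : (0 : ℝ) < R) hz
    simpa [hadef] using this
  have hbd : ∀ k, Real.log R - Real.log 2 ≤ a k := by
    intro k
    have h1 := hlow k
    have hp0 : (0 : ℝ) ≤ (1 / 2 : ℝ) ^ k := by positivity
    have hp1 : ((1 : ℝ) / 2) ^ k ≤ 1 := pow_le_one₀ (by norm_num) (by norm_num)
    nlinarith
  have hL0 : Real.log R - Real.log 2 ≤ L := ge_of_tendsto' hL hbd
  have hlog24 : Real.log 2 < Real.log R :=
    Real.log_lt_log (by norm_num) (by linarith)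
  have hLpos : 0 < L := by linarith
  refine ⟨fun k => ⟨?_, (key _ (horb k)).2.2⟩, ?_, ?_, ?_⟩
  · rw [Function.iterate_succ_apply']
    exact (key _ (horb k)).1
  · show Tendsto a atTop (𝓝 (limUnder atTop a))
    rwa [hlim]
  · show 0 < limUnder atTop a
    rw [hlim]; exact hLpos
  · have hshift : Tendsto (fun k => a (k + 1)) atTop (𝓝 L) :=
      hL.comp (tendsto_add_atTop_nat 1)
    have hmul : Tendsto (fun k => (d : ℝ) * a (k + 1)) atTop (𝓝 ((d : ℝ) * L)) :=
      hshift.const_mul _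
    have hfun : (fun k : ℕ => Real.log ‖(P.eval)^[k] (P.eval z)‖ / (d : ℝ) ^ k)
        = fun k => (d : ℝ) * a (k + 1) := by
      funext k
      rw [← Function.iterate_succ_apply]
      simp only [hadef]
      rw [pow_succ]
      have : (d : ℝ) ^ k ≠ 0 := by positivity
      field_simp
    show limUnder atTop (fun k : ℕ => Real.log ‖(P.eval)^[k] (P.eval z)‖ / (d : ℝ) ^ k)
        = (d : ℝ) * limUnder atTop a
    rw [hfun, hmul.limUnder_eq, hlim]
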